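/- arXiv:2605.30827 — 6 statements merged into one kernel-verified Lean document; each statement's English description precedes it below -/
import Mathlib

section
/- Contraction estimate for the DGC iteration map: if ‖∇̄H(ȳ, v)‖ ≥ C > 0 and ‖∇̄H(ȳ, w) − ∇̄H(ȳ, v)‖ ≤ L₀‖w − v‖ for all v, w in a set S, then for all v, w ∈ S, ‖g(ȳ, w) − g(ȳ, v)‖ ≤ (L₀/C²)|H(y₀) − H(ȳ)| · ‖w − v‖, where g(ȳ, v) = ȳ + [(H(y₀) − H(ȳ))/‖∇̄H(ȳ, v)‖²] ∇̄H(ȳ, v). -/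
lemma inv_sq_smul_diff {E : Type*} [NormedAddCommGroup E] [InnerProductSpace ℝ E]
    (a b : E) (ha : a ≠ 0) (hb : b ≠ 0) :
    ‖(‖a‖ ^ 2)⁻¹ • a - (‖b‖ ^ 2)⁻¹ • b‖ = ‖a - b‖ / (‖a‖ * ‖b‖) := by
  have hna : (0:ℝ) < ‖a‖ := norm_pos_iff.mpr ha
  have hnb : (0:ℝ) < ‖b‖ := norm_pos_iff.mpr hb
  have h1 : ‖(‖a‖ ^ 2)⁻¹ • a - (‖b‖ ^ 2)⁻¹ • b‖ ^ 2 = (‖a - b‖ / (‖a‖ * ‖b‖)) ^ 2 := by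
    rw [div_pow, norm_sub_sq_real, norm_sub_sq_real, norm_smul, norm_smul,
      real_inner_smul_left, real_inner_smul_right]
    simp only [Real.norm_eq_abs, abs_inv, abs_pow, abs_norm]
    field_simp
    ring
  have h2 := congrArg Real.sqrt h1
  rwa [Real.sqrt_sq (norm_nonneg _), Real.sqrt_sq (by positivity)] at h2

/-- Contraction estimate for the DGC iteration map. -/
theorem dgc_contraction_estimate (d : ℕ) (H : EuclideanSpace ℝ (Fin d) → ℝ)
    (y₀ ybar : EuclideanSpace ℝ (Fin d))
    (dg : EuclideanSpace ℝ (Fin d) → EuclideanSpace ℝ (Fin d) → EuclideanSpace ℝ (Fin d))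
    (S : Set (EuclideanSpace ℝ (Fin d)))
    (C L₀ : ℝ) (hC : 0 < C) (hL₀ : 0 < L₀)
    (hlow : ∀ v ∈ S, C ≤ ‖dg ybar v‖)
    (hlip : ∀ v ∈ S, ∀ w ∈ S, ‖dg ybar w - dg ybar v‖ ≤ L₀ * ‖w - v‖) :
    ∀ v ∈ S, ∀ w ∈ S,
      ‖(ybar + ((H y₀ - H ybar) / ‖dg ybar w‖ ^ 2) • dg ybar w) -
        (ybar + ((H y₀ - H ybar) / ‖dg ybar v‖ ^ 2) • dg ybar v)‖
        ≤ (L₀ / C ^ 2) * |H y₀ - H ybar| * ‖w - v‖ := by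
  intro v hv w hw
  set a := dg ybar w with ha'
  set b := dg ybar v with hb'
  have hCa : C ≤ ‖a‖ := hlow w hw
  have hCb : C ≤ ‖b‖ := hlow v hv
  have hna : (0:ℝ) < ‖a‖ := lt_of_lt_of_le hC hCa
  have hnb : (0:ℝ) < ‖b‖ := lt_of_lt_of_le hC hCb
  have hane : a ≠ 0 := norm_pos_iff.mp hna
  have hbne : b ≠ 0 := norm_pos_iff.mp hnb
  set c := H y₀ - H ybar with hc'
  have key : (ybar + (c / ‖a‖ ^ 2) • a) - (ybar + (c / ‖b‖ ^ 2) • b)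
      = c • ((‖a‖ ^ 2)⁻¹ • a - (‖b‖ ^ 2)⁻¹ • b) := by
    rw [smul_sub, smul_smul, smul_smul]
    rw [div_eq_mul_inv, div_eq_mul_inv]
    abel
  rw [key, norm_smul, Real.norm_eq_abs, inv_sq_smul_diff a b hane hbne]
  have hlipwv : ‖a - b‖ ≤ L₀ * ‖w - v‖ := hlip v hv w hw
  have h1 : ‖a - b‖ / (‖a‖ * ‖b‖) ≤ L₀ * ‖w - v‖ / C ^ 2 := by
    apply div_le_div₀ (by positivity) hlipwv (by positivity)
    calc C ^ 2 = C * C := sq C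
    _ ≤ ‖a‖ * ‖b‖ := mul_le_mul hCa hCb hC.le hna.le
  calc |c| * (‖a - b‖ / (‖a‖ * ‖b‖)) ≤ |c| * (L₀ * ‖w - v‖ / C ^ 2) := by
        exact mul_le_mul_of_nonneg_left h1 (abs_nonneg c)
    _ = (L₀ / C ^ 2) * |c| * ‖w - v‖ := by ring
end

section
/- Uniqueness of the DGC correction: under the lower bound ‖∇̄H(ȳ, v)‖ ≥ C > 0 and local Lipschitz continuity ‖∇̄H(ȳ, w) − ∇̄H(ȳ, v)‖ ≤ L₀‖w − v‖ on a complete set S mapped into itself by g(ȳ, ·), if (L₀/C²)|H(y₀) − H(ȳ)| < 1 then the equation y = g(ȳ, y) has a unique solution in S, obtained as the limit of the fixed point iteration from any starting point. -/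
open Filter Topology

lemma inversion_dist {E : Type*} [NormedAddCommGroup E] [InnerProductSpace ℝ E]
    (a b : E) (ha : a ≠ 0) (hb : b ≠ 0) :
    ‖(1/‖a‖^2) • a - (1/‖b‖^2) • b‖ = ‖a - b‖ / (‖a‖ * ‖b‖) := by
  have hna : (0:ℝ) < ‖a‖ := norm_pos_iff.2 ha
  have hnb : (0:ℝ) < ‖b‖ := norm_pos_iff.2 hb
  have hsq : ‖(1/‖a‖^2) • a - (1/‖b‖^2) • b‖^2 = (‖a - b‖ / (‖a‖ * ‖b‖))^2 := by
    rw [div_pow, @norm_sub_sq_real, @norm_sub_sq_real, norm_smul, norm_smul,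
      real_inner_smul_left, real_inner_smul_right]
    simp only [norm_div, norm_one, norm_pow, norm_norm, Real.norm_eq_abs, abs_norm]
    field_simp
    ring
  have h1 : (0:ℝ) ≤ ‖(1/‖a‖^2) • a - (1/‖b‖^2) • b‖ := norm_nonneg _
  have h2 : (0:ℝ) ≤ ‖a - b‖ / (‖a‖ * ‖b‖) := by positivity
  nlinarith [hsq]

/-- Uniqueness of the DGC correction via the Banach fixed point theorem. -/
theorem dgc_uniqueness (d : ℕ) (H : EuclideanSpace ℝ (Fin d) → ℝ)
    (y₀ ybar : EuclideanSpace ℝ (Fin d))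
    (dg : EuclideanSpace ℝ (Fin d) → EuclideanSpace ℝ (Fin d) → EuclideanSpace ℝ (Fin d))
    (S : Set (EuclideanSpace ℝ (Fin d))) (hS : S.Nonempty) (hSclosed : IsClosed S)
    (g : EuclideanSpace ℝ (Fin d) → EuclideanSpace ℝ (Fin d))
    (hg : ∀ v, g v = ybar + ((H y₀ - H ybar) / ‖dg ybar v‖ ^ 2) • dg ybar v)
    (hmaps : Set.MapsTo g S S)
    (C L₀ : ℝ) (hC : 0 < C) (hL₀ : 0 < L₀)
    (hlow : ∀ v ∈ S, C ≤ ‖dg ybar v‖)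
    (hlip : ∀ v ∈ S, ∀ w ∈ S, ‖dg ybar w - dg ybar v‖ ≤ L₀ * ‖w - v‖)
    (hcontract : (L₀ / C ^ 2) * |H y₀ - H ybar| < 1) :
    ∃ y ∈ S, y = g y ∧ (∀ z ∈ S, z = g z → z = y) ∧
      ∀ x₀ ∈ S, Tendsto (fun n => g^[n] x₀) atTop (𝓝 y) := by
  set c : ℝ := H y₀ - H ybar with hc
  set k : ℝ := (L₀ / C ^ 2) * |c| with hk
  have hk0 : 0 ≤ k := by positivity
  -- the key contraction estimate
  have key : ∀ v ∈ S, ∀ w ∈ S, dist (g w) (g v) ≤ k * dist w v := by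
    intro v hv w hw
    have haC := hlow v hv
    have hbC := hlow w hw
    have ha : dg ybar v ≠ 0 := by
      intro h; rw [h, norm_zero] at haC; linarith
    have hb : dg ybar w ≠ 0 := by
      intro h; rw [h, norm_zero] at hbC; linarith
    have hna : (0:ℝ) < ‖dg ybar v‖ := lt_of_lt_of_le hC haC
    have hnb : (0:ℝ) < ‖dg ybar w‖ := lt_of_lt_of_le hC hbC
    have e1 : g w - g v = c • ((1/‖dg ybar w‖^2) • dg ybar w - (1/‖dg ybar v‖^2) • dg ybar v) := by
      rw [hg, hg, add_sub_add_left_eq_sub, smul_sub, smul_smul, smul_smul]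
      congr 2 <;> field_simp
    have e2 : dist (g w) (g v) = |c| * (‖dg ybar w - dg ybar v‖ / (‖dg ybar w‖ * ‖dg ybar v‖)) := by
      rw [dist_eq_norm, e1, norm_smul, Real.norm_eq_abs,
        inversion_dist _ _ hb ha]
    rw [e2, dist_eq_norm]
    have h3 : ‖dg ybar w - dg ybar v‖ / (‖dg ybar w‖ * ‖dg ybar v‖)
        ≤ (L₀ * ‖w - v‖) / (C * C) := by
      apply div_le_div₀ (by positivity) (hlip v hv w hw) (by positivity)
      exact mul_le_mul hbC haC (le_of_lt hC) (le_of_lt hnb)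
    calc |c| * (‖dg ybar w - dg ybar v‖ / (‖dg ybar w‖ * ‖dg ybar v‖))
        ≤ |c| * ((L₀ * ‖w - v‖) / (C * C)) :=
          mul_le_mul_of_nonneg_left h3 (abs_nonneg _)
      _ = k * ‖w - v‖ := by rw [hk]; field_simp
  -- set up the contraction on the subtype
  have hScomplete : IsComplete S := hSclosed.isComplete
  set K : NNReal := ⟨k, hk0⟩ with hK
  have hK1 : (K : NNReal) < 1 := by
    rw [← NNReal.coe_lt_coe]
    exact hcontract
  have hcontr : ContractingWith K (hmaps.restrict g S S) := by
    refine ⟨hK1, LipschitzWith.of_dist_le_mul fun x y => ?_⟩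
    exact key y y.2 x x.2
  -- existence of fixed point from hS.some
  obtain ⟨x, hx⟩ := hS
  obtain ⟨y, hyS, hyfix, _, _⟩ :=
    hcontr.exists_fixedPoint' hScomplete hmaps hx (edist_ne_top _ _)
  have huniq : ∀ z ∈ S, z = g z → z = y := by
    intro z hz hzg
    have h := key z hz y hyS
    rw [hyfix.eq, ← hzg] at h
    have hd0 : dist y z = 0 := by
      have hk1 : k < 1 := hcontract
      nlinarith [dist_nonneg (x := y) (y := z)]
    exact (dist_eq_zero.1 hd0).symm
  refine ⟨y, hyS, hyfix.eq.symm, huniq, ?_⟩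
  intro x₀ hx₀
  obtain ⟨y', hy'S, hy'fix, htend, _⟩ :=
    hcontr.exists_fixedPoint' hScomplete hmaps hx₀ (edist_ne_top _ _)
  have : y' = y := huniq y' hy'S hy'fix.eq.symm
  rwa [this] at htend
end

section
/- Conservation of the DGC method (single invariant): if y satisfies y = ȳ + [(H(y₀) − H(ȳ))/‖∇̄H(ȳ, y)‖²] ∇̄H(ȳ, y) with ∇̄H(ȳ, y) ≠ 0, and ∇̄H satisfies the discrete gradient identity ∇̄H(x, z)·(z − x) = H(z) − H(x), then H(y) = H(y₀). -/
open InnerProductSpace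

/-- Conservation of the DGC method with a single invariant. -/
theorem dgc_conservation (d : ℕ) (H : EuclideanSpace ℝ (Fin d) → ℝ)
    (y₀ ybar y : EuclideanSpace ℝ (Fin d))
    (dg : EuclideanSpace ℝ (Fin d) → EuclideanSpace ℝ (Fin d) → EuclideanSpace ℝ (Fin d))
    (hdg : ∀ x z, ⟪dg x z, z - x⟫_ℝ = H z - H x)
    (hne : dg ybar y ≠ 0)
    (hy : y = ybar + ((H y₀ - H ybar) / ‖dg ybar y‖ ^ 2) • dg ybar y) :
    H y = H y₀ := by
  have h := hdg ybar y
  have hsub : y - ybar = ((H y₀ - H ybar) / ‖dg ybar y‖ ^ 2) • dg ybar y := by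
    conv_lhs => rw [hy, add_sub_cancel_left]
  rw [hsub, real_inner_smul_right, real_inner_self_eq_norm_sq,
    div_mul_cancel₀ _ (pow_ne_zero 2 (norm_ne_zero_iff.mpr hne))] at h
  linarith
end

section
/- Consistency of the DGC correction: suppose the exact point y* satisfies ‖ȳ − y*‖ ≤ K h^{p+1} (predictor of order p), H is continuously differentiable with gradient bounded by M on the segment joining ȳ and y*, H(y₀) = H(y*), and ‖∇̄H(ȳ, y)‖ ≥ C > 0 at the corrected value y. Then the corrected value satisfies ‖y − y*‖ ≤ (1 + M/C) K h^{p+1}. -/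
/-- Consistency of the DGC correction step. -/
theorem dgc_consistency (d : ℕ) (H : EuclideanSpace ℝ (Fin d) → ℝ) (hH : ContDiff ℝ 1 H)
    (y₀ ybar ystar y : EuclideanSpace ℝ (Fin d))
    (dg : EuclideanSpace ℝ (Fin d) → EuclideanSpace ℝ (Fin d) → EuclideanSpace ℝ (Fin d))
    (h K M C : ℝ) (hh : 0 < h) (hK : 0 < K) (hM : 0 < M) (hC : 0 < C) (p : ℕ)
    (hpred : ‖ybar - ystar‖ ≤ K * h ^ (p + 1))
    (hgrad : ∀ t ∈ segment ℝ ybar ystar, ‖gradient H t‖ ≤ M)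
    (hinv : H y₀ = H ystar)
    (hlow : C ≤ ‖dg ybar y‖)
    (hy : y = ybar + ((H y₀ - H ybar) / ‖dg ybar y‖ ^ 2) • dg ybar y) :
    ‖y - ystar‖ ≤ (1 + M / C) * K * h ^ (p + 1) := by
  have hdgpos : (0:ℝ) < ‖dg ybar y‖ := lt_of_lt_of_le hC hlow
  -- mean value inequality
  have hmv : |H ystar - H ybar| ≤ M * ‖ystar - ybar‖ := by
    have := Convex.norm_image_sub_le_of_norm_fderiv_le
      (f := H) (s := segment ℝ ybar ystar) (C := M)
      (fun x _ => (hH.differentiable one_ne_zero).differentiableAt)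
      (fun x hx => by
        have := hgrad x hx
        rwa [gradient, LinearIsometryEquiv.norm_map] at this)
      (convex_segment _ _) (left_mem_segment _ _ _) (right_mem_segment _ _ _)
    simpa [Real.norm_eq_abs] using this
  have hnorm : ‖ystar - ybar‖ = ‖ybar - ystar‖ := norm_sub_rev _ _
  have hcorr : ‖y - ybar‖ ≤ M * ‖ybar - ystar‖ / C := by
    have hsub : y - ybar = ((H y₀ - H ybar) / ‖dg ybar y‖ ^ 2) • dg ybar y := by
      nth_rewrite 1 [hy]; abel
    have : ‖y - ybar‖ = |H y₀ - H ybar| / ‖dg ybar y‖ := by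
      rw [hsub, norm_smul, Real.norm_eq_abs, abs_div,
        abs_of_nonneg (by positivity : (0:ℝ) ≤ ‖dg ybar y‖^2)]
      rw [pow_two]
      rw [div_mul_eq_div_div]
      field_simp
    rw [this, hinv]
    calc |H ystar - H ybar| / ‖dg ybar y‖ ≤ (M * ‖ybar - ystar‖) / ‖dg ybar y‖ := by
          gcongr
          rwa [hnorm] at hmv
      _ ≤ M * ‖ybar - ystar‖ / C := by
          gcongr
  calc ‖y - ystar‖ ≤ ‖y - ybar‖ + ‖ybar - ystar‖ := norm_sub_le_norm_sub_add_norm_sub _ _ _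
    _ ≤ M * ‖ybar - ystar‖ / C + ‖ybar - ystar‖ := by linarith
    _ ≤ M * (K * h ^ (p+1)) / C + K * h ^ (p+1) := by
        gcongr
    _ = (1 + M / C) * K * h ^ (p + 1) := by field_simp; ring
end

section
/- One-step stability estimate for the DGC method: under the assumptions that ‖∇̄H‖ ≥ C on relevant arguments, ψ_h(u) = φ_h(u)·∇̄H(u + hφ_h(u), u) is Lipschitz with constant L_ψ and bounded by C₁, φ_h is Lipschitz with constant L_φ, and ∇̄H is Lipschitz with constant L₀ in both arguments, the DGC updates y_{n+1}, z_{n+1} from y_n, z_n satisfy (1 − hC₁L₀/C²)‖y_{n+1} − z_{n+1}‖ ≤ [hL_ψ/C + (1 + hC₁L₀/C²)(1 + hL_φ)]‖y_n − z_n‖. -/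
open InnerProductSpace

lemma dgc_aux {E : Type*} [NormedAddCommGroup E] [InnerProductSpace ℝ E]
    (u v : E) (hu : u ≠ 0) (hv : v ≠ 0) (a b : ℝ) :
    ‖(a / ‖u‖ ^ 2) • u - (b / ‖v‖ ^ 2) • v‖ ≤
      |a - b| / ‖u‖ + |b| * ‖u - v‖ / (‖u‖ * ‖v‖) := by
  have hu' : (0:ℝ) < ‖u‖ := norm_pos_iff.2 hu
  have hv' : (0:ℝ) < ‖v‖ := norm_pos_iff.2 hv
  have hkey : ‖(1 / ‖u‖) ^ 2 • u - (1 / ‖v‖) ^ 2 • v‖ = 1 / (‖u‖ * ‖v‖) * ‖u - v‖ := by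
    have := dist_div_norm_sq_smul hu hv 1
    simpa [dist_eq_norm, one_pow] using this
  have hsplit : (a / ‖u‖ ^ 2) • u - (b / ‖v‖ ^ 2) • v =
      ((a - b) / ‖u‖ ^ 2) • u + b • ((1 / ‖u‖) ^ 2 • u - (1 / ‖v‖) ^ 2 • v) := by
    rw [smul_sub, smul_smul, smul_smul]
    have h1 : b * (1 / ‖u‖) ^ 2 = b / ‖u‖ ^ 2 := by field_simp
    have h2 : b * (1 / ‖v‖) ^ 2 = b / ‖v‖ ^ 2 := by field_simp
    rw [h1, h2]
    module
  rw [hsplit]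
  calc ‖((a - b) / ‖u‖ ^ 2) • u + b • ((1 / ‖u‖) ^ 2 • u - (1 / ‖v‖) ^ 2 • v)‖
      ≤ ‖((a - b) / ‖u‖ ^ 2) • u‖ + ‖b • ((1 / ‖u‖) ^ 2 • u - (1 / ‖v‖) ^ 2 • v)‖ :=
        norm_add_le _ _
    _ = |a - b| / ‖u‖ + |b| * ‖u - v‖ / (‖u‖ * ‖v‖) := by
        rw [norm_smul, norm_smul, hkey, Real.norm_eq_abs, Real.norm_eq_abs]
        rw [abs_div, abs_of_nonneg (by positivity : (0:ℝ) ≤ ‖u‖ ^ 2)]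
        field_simp

/-- One-step stability estimate for the DGC method. -/
theorem dgc_stability_one_step (d : ℕ) (H : EuclideanSpace ℝ (Fin d) → ℝ)
    (h : ℝ) (hh : 0 < h)
    (φ : EuclideanSpace ℝ (Fin d) → EuclideanSpace ℝ (Fin d))
    (dg : EuclideanSpace ℝ (Fin d) → EuclideanSpace ℝ (Fin d) → EuclideanSpace ℝ (Fin d))
    (ψ : EuclideanSpace ℝ (Fin d) → ℝ)
    (hψdef : ∀ u, ψ u = ⟪φ u, dg (u + h • φ u) u⟫_ℝ)
    (C C₁ L₀ Lφ Lψ : ℝ) (hC : 0 < C) (hC₁ : 0 < C₁) (hL₀ : 0 < L₀) (hLφ : 0 < Lφ) (hLψ : 0 < Lψ)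
    (hlow : ∀ x z, C ≤ ‖dg x z‖)
    (hψlip : ∀ u v, |ψ u - ψ v| ≤ Lψ * ‖u - v‖)
    (hψbound : ∀ u, |ψ u| ≤ C₁)
    (hφlip : ∀ u v, ‖φ u - φ v‖ ≤ Lφ * ‖u - v‖)
    (hdglip : ∀ x z x' z', ‖dg x z - dg x' z'‖ ≤ L₀ * (‖x - x'‖ + ‖z - z'‖))
    (yn zn yn1 zn1 : EuclideanSpace ℝ (Fin d))
    (hy : yn1 = (yn + h • φ yn) -
      ((h * ψ yn) / ‖dg (yn + h • φ yn) yn1‖ ^ 2) • dg (yn + h • φ yn) yn1)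
    (hz : zn1 = (zn + h • φ zn) -
      ((h * ψ zn) / ‖dg (zn + h • φ zn) zn1‖ ^ 2) • dg (zn + h • φ zn) zn1) :
    (1 - h * C₁ * L₀ / C ^ 2) * ‖yn1 - zn1‖ ≤
      (h * Lψ / C + (1 + h * C₁ * L₀ / C ^ 2) * (1 + h * Lφ)) * ‖yn - zn‖ := by
  set yb := yn + h • φ yn with hyb
  set zb := zn + h • φ zn with hzb
  set u := dg yb yn1 with hudef
  set v := dg zb zn1 with hvdef
  have hnu : C ≤ ‖u‖ := hlow _ _
  have hnv : C ≤ ‖v‖ := hlow _ _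
  have hu0 : u ≠ 0 := fun hz0 => by simp [hz0] at hnu; linarith
  have hv0 : v ≠ 0 := fun hz0 => by simp [hz0] at hnv; linarith
  have hu' : (0:ℝ) < ‖u‖ := lt_of_lt_of_le hC hnu
  have hv' : (0:ℝ) < ‖v‖ := lt_of_lt_of_le hC hnv
  set a := h * ψ yn with ha
  set b := h * ψ zn with hb
  -- bound on barred difference
  have hB : ‖yb - zb‖ ≤ (1 + h * Lφ) * ‖yn - zn‖ := by
    have h1 : yb - zb = (yn - zn) + h • (φ yn - φ zn) := by
      rw [hyb, hzb]; module
    rw [h1]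
    calc ‖(yn - zn) + h • (φ yn - φ zn)‖ ≤ ‖yn - zn‖ + ‖h • (φ yn - φ zn)‖ := norm_add_le _ _
      _ = ‖yn - zn‖ + h * ‖φ yn - φ zn‖ := by
          rw [norm_smul, Real.norm_eq_abs, abs_of_pos hh]
      _ ≤ ‖yn - zn‖ + h * (Lφ * ‖yn - zn‖) := by
          have := hφlip yn zn
          nlinarith
      _ = (1 + h * Lφ) * ‖yn - zn‖ := by ring
  -- decompose
  have hdiff : yn1 - zn1 = (yb - zb) - ((a / ‖u‖ ^ 2) • u - (b / ‖v‖ ^ 2) • v) := by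
    rw [hy, hz]; module
  have htri : ‖yn1 - zn1‖ ≤ ‖yb - zb‖ + ‖(a / ‖u‖ ^ 2) • u - (b / ‖v‖ ^ 2) • v‖ := by
    rw [hdiff]; exact norm_sub_le _ _
  have haux := dgc_aux u v hu0 hv0 a b
  -- bounds on pieces
  have hab : |a - b| ≤ h * Lψ * ‖yn - zn‖ := by
    have h1 : a - b = h * (ψ yn - ψ zn) := by rw [ha, hb]; ring
    rw [h1, abs_mul, abs_of_pos hh, mul_assoc]
    exact mul_le_mul_of_nonneg_left (hψlip yn zn) hh.le
  have hbb : |b| ≤ h * C₁ := by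
    rw [hb, abs_mul, abs_of_pos hh]
    exact mul_le_mul_of_nonneg_left (hψbound zn) hh.le
  have huv : ‖u - v‖ ≤ L₀ * (‖yb - zb‖ + ‖yn1 - zn1‖) := hdglip _ _ _ _
  -- combine: term1 ≤ hLψ‖yn-zn‖/C
  have ht1 : |a - b| / ‖u‖ ≤ h * Lψ * ‖yn - zn‖ / C := by
    apply div_le_div₀ (by positivity) hab hC hnu
  have ht2 : |b| * ‖u - v‖ / (‖u‖ * ‖v‖) ≤
      h * C₁ * (L₀ * (‖yb - zb‖ + ‖yn1 - zn1‖)) / C ^ 2 := by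
    apply div_le_div₀ (by positivity)
    · exact mul_le_mul hbb huv (norm_nonneg _) (by positivity)
    · positivity
    · calc C ^ 2 = C * C := sq C
        _ ≤ ‖u‖ * ‖v‖ := mul_le_mul hnu hnv hC.le (norm_nonneg _)
  have hδ : ‖yn1 - zn1‖ ≤ ‖yb - zb‖ + h * Lψ * ‖yn - zn‖ / C +
      h * C₁ * (L₀ * (‖yb - zb‖ + ‖yn1 - zn1‖)) / C ^ 2 := by
    linarith
  have hC2 : (0:ℝ) < C ^ 2 := by positivity
  have hfrac : (0:ℝ) ≤ h * C₁ * L₀ / C ^ 2 := by positivity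
  have hnn : (0:ℝ) ≤ ‖yn1 - zn1‖ := norm_nonneg _
  have hBnn : (0:ℝ) ≤ ‖yb - zb‖ := norm_nonneg _
  have key : h * C₁ * (L₀ * (‖yb - zb‖ + ‖yn1 - zn1‖)) / C ^ 2 =
      (h * C₁ * L₀ / C ^ 2) * ‖yb - zb‖ + (h * C₁ * L₀ / C ^ 2) * ‖yn1 - zn1‖ := by
    field_simp
  rw [key] at hδ
  have hBB : (1 + h * C₁ * L₀ / C ^ 2) * ‖yb - zb‖ ≤
      (1 + h * C₁ * L₀ / C ^ 2) * ((1 + h * Lφ) * ‖yn - zn‖) := by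
    apply mul_le_mul_of_nonneg_left hB (by linarith)
  have goal2 : (1 - h * C₁ * L₀ / C ^ 2) * ‖yn1 - zn1‖ ≤
      h * Lψ / C * ‖yn - zn‖ + (1 + h * C₁ * L₀ / C ^ 2) * ((1 + h * Lφ) * ‖yn - zn‖) := by
    have e1 : (1 - h * C₁ * L₀ / C ^ 2) * ‖yn1 - zn1‖ =
        ‖yn1 - zn1‖ - h * C₁ * L₀ / C ^ 2 * ‖yn1 - zn1‖ := by ring
    have e2 : (1 + h * C₁ * L₀ / C ^ 2) * ‖yb - zb‖ =
        ‖yb - zb‖ + h * C₁ * L₀ / C ^ 2 * ‖yb - zb‖ := by ring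
    have e3 : h * Lψ / C * ‖yn - zn‖ = h * Lψ * ‖yn - zn‖ / C := by ring
    rw [e1, e3]
    linarith [hBB, hδ, e2]
  calc (1 - h * C₁ * L₀ / C ^ 2) * ‖yn1 - zn1‖
      ≤ h * Lψ / C * ‖yn - zn‖ + (1 + h * C₁ * L₀ / C ^ 2) * ((1 + h * Lφ) * ‖yn - zn‖) := goal2
    _ = (h * Lψ / C + (1 + h * C₁ * L₀ / C ^ 2) * (1 + h * Lφ)) * ‖yn - zn‖ := by ring
end

section
/- Conservation of the multi-invariant DGC method: if y = ȳ + Σᵢ λᵢ ∇̄Hᵢ(ȳ, y) where λ ∈ ℝ^k solves Aλ = b with A_{ij} = ∇̄Hᵢ(ȳ,y)·∇̄Hⱼ(ȳ,y) and bⱼ = Hⱼ(y₀) − Hⱼ(ȳ), and each ∇̄Hᵢ satisfies the discrete gradient identity ∇̄Hᵢ(x,z)·(z−x) = Hᵢ(z) − Hᵢ(x), then Hⱼ(y) = Hⱼ(y₀) for every j = 1,…,k. -/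
open InnerProductSpace

/-- Conservation of the multi-invariant DGC method. -/
theorem dgc_multi_conservation (d k : ℕ)
    (H : Fin k → EuclideanSpace ℝ (Fin d) → ℝ)
    (y₀ ybar y : EuclideanSpace ℝ (Fin d))
    (dg : Fin k → EuclideanSpace ℝ (Fin d) → EuclideanSpace ℝ (Fin d) → EuclideanSpace ℝ (Fin d))
    (hdg : ∀ i x z, ⟪dg i x z, z - x⟫_ℝ = H i z - H i x)
    (lam : Fin k → ℝ)
    (hlam : ∀ j, ∑ i, lam i * ⟪dg j ybar y, dg i ybar y⟫_ℝ = H j y₀ - H j ybar)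
    (hy : y = ybar + ∑ i, lam i • dg i ybar y) :
    ∀ j, H j y = H j y₀ := by
  intro j
  have hsub : y - ybar = ∑ i, lam i • dg i ybar y := by
    conv_lhs => rw [hy]
    abel
  have h1 : ⟪dg j ybar y, y - ybar⟫_ℝ = H j y₀ - H j ybar := by
    rw [hsub, inner_sum]
    simp only [real_inner_smul_right]
    exact hlam j
  have h2 := hdg j ybar y
  linarith [h1.symm.trans h2]
end
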